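/- In A(S⁷_q), the elements t = q⁻²x̄²x₂ + q⁻²x̄¹x₁, a = q⁻⁴x₁x̄³ − q⁻²x₂x̄⁴, b = −q⁻³x₁x₄ − q⁻²x₂x₃ and their conjugates satisfy: ab = q⁴ba, āb = bā, ta = q⁻²at, tb = q⁴bt, together with the sphere relations aā + bb̄ = q⁻²t(1−q⁻²t), q⁴āa + q⁻⁴b̄b = t(1−t), and bb̄ − q⁻⁴b̄b = (1−q⁻⁴)t². -/
import Mathlib



private lemma inv_smul_helper {R : Type*} [Ring R] [Module ℝ R] (c : ℝ) (hc : c ≠ 0)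
    {u v : R} (h : u = c • v) : v = c⁻¹ • u := by
  rw [h, smul_smul, inv_mul_cancel₀ hc, one_smul]

set_option maxHeartbeats 8000000 in
/-- In `A(S⁷_q)`, the elements `t = q⁻²x̄²x₂ + q⁻²x̄¹x₁`,
`a = q⁻⁴x₁x̄³ − q⁻²x₂x̄⁴`, `b = −q⁻³x₁x₄ − q⁻²x₂x₃` satisfy
`ab = q⁴ba`, `āb = bā`, `ta = q⁻²at`, `tb = q⁴bt`, the sphere relations
`aā + bb̄ = q⁻²t(1−q⁻²t)`, `q⁴āa + q⁻⁴b̄b = t(1−t)`, and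
`bb̄ − q⁻⁴b̄b = (1−q⁻⁴)t²`. -/
theorem stmt_16 (q : ℝ) (hq0 : 0 < q) (hq1 : q < 1)
    (R : Type*) [Ring R] [StarRing R] [Algebra ℝ R] [StarModule ℝ R]
    (x : Fin 4 → R)
    (h12 : x 0 * x 1 = q • (x 1 * x 0))
    (h13 : x 0 * x 2 = q • (x 2 * x 0))
    (h24 : x 1 * x 3 = q • (x 3 * x 1))
    (h34 : x 2 * x 3 = q • (x 3 * x 2))
    (h41 : x 3 * x 0 = q⁻¹ ^ 2 • (x 0 * x 3))
    (h32 : x 2 * x 1 = q⁻¹ ^ 2 • (x 1 * x 2) + (q⁻¹ ^ 2 * (q⁻¹ - q)) • (x 0 * x 3))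
    (m11 : x 0 * star (x 0) = star (x 0) * x 0)
    (m12 : x 0 * star (x 1) = q⁻¹ • (star (x 1) * x 0))
    (m13 : x 0 * star (x 2) = q⁻¹ • (star (x 2) * x 0))
    (m14 : x 0 * star (x 3) = q⁻¹ ^ 2 • (star (x 3) * x 0))
    (m22 : x 1 * star (x 1) = star (x 1) * x 1 + (1 - q⁻¹ ^ 2) • (star (x 0) * x 0))
    (m23 : x 1 * star (x 2) = q⁻¹ ^ 2 • (star (x 2) * x 1))
    (m24 : x 1 * star (x 3)
      = q⁻¹ • (star (x 3) * x 1) + (q⁻¹ * (q⁻¹ ^ 2 - 1)) • (star (x 2) * x 0))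
    (m33 : x 2 * star (x 2) = star (x 2) * x 2
      + (1 - q⁻¹ ^ 2) • (star (x 0) * x 0 + (1 + q⁻¹ ^ 2) • (star (x 1) * x 1)))
    (m34 : x 2 * star (x 3)
      = q⁻¹ • (star (x 3) * x 2) + ((1 - q⁻¹ ^ 2) * q⁻¹ ^ 3) • (star (x 1) * x 0))
    (m44 : x 3 * star (x 3) = star (x 3) * x 3
      + (1 - q⁻¹ ^ 2) • ((1 + q⁻¹ ^ 4) • (star (x 0) * x 0)
          + star (x 1) * x 1 + star (x 2) * x 2))
    (hsph : ∑ i, star (x i) * x i = 1)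
    (t a b : R)
    (ht : t = q⁻¹ ^ 2 • (star (x 1) * x 1) + q⁻¹ ^ 2 • (star (x 0) * x 0))
    (ha : a = q⁻¹ ^ 4 • (x 0 * star (x 2)) - q⁻¹ ^ 2 • (x 1 * star (x 3)))
    (hb : b = -(q⁻¹ ^ 3 • (x 0 * x 3)) - q⁻¹ ^ 2 • (x 1 * x 2)) :
    a * b = q ^ 4 • (b * a) ∧
    star a * b = b * star a ∧
    t * a = q⁻¹ ^ 2 • (a * t) ∧
    t * b = q ^ 4 • (b * t) ∧
    a * star a + b * star b = q⁻¹ ^ 2 • t - q⁻¹ ^ 4 • (t * t) ∧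
    q ^ 4 • (star a * a) + q⁻¹ ^ 4 • (star b * b) = t - t * t ∧
    b * star b - q⁻¹ ^ 4 • (star b * b) = (1 - q⁻¹ ^ 4) • (t * t) := by
  have hq : q ≠ 0 := ne_of_gt hq0
  have h41' : ∀ z : R, x 3 * (x 0 * z) = (q⁻¹ ^ 2) • (x 0 * (x 3 * z)) := fun z => by
    rw [← mul_assoc, h41]; simp only [add_mul, smul_mul_assoc, mul_assoc]
  have h32' : ∀ z : R, x 2 * (x 1 * z) = (q⁻¹ ^ 2) • (x 1 * (x 2 * z)) + (q⁻¹ ^ 2 * (q⁻¹ - q)) • (x 0 * (x 3 * z)) := fun z => by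
    rw [← mul_assoc, h32]; simp only [add_mul, smul_mul_assoc, mul_assoc]
  have rx10 : x 1 * x 0 = (q⁻¹) • (x 0 * x 1) := inv_smul_helper q hq h12
  have rx10' : ∀ z : R, x 1 * (x 0 * z) = (q⁻¹) • (x 0 * (x 1 * z)) := fun z => by
    rw [← mul_assoc, rx10]; simp only [add_mul, smul_mul_assoc, mul_assoc]
  have rx20 : x 2 * x 0 = (q⁻¹) • (x 0 * x 2) := inv_smul_helper q hq h13
  have rx20' : ∀ z : R, x 2 * (x 0 * z) = (q⁻¹) • (x 0 * (x 2 * z)) := fun z => by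
    rw [← mul_assoc, rx20]; simp only [add_mul, smul_mul_assoc, mul_assoc]
  have rx31 : x 3 * x 1 = (q⁻¹) • (x 1 * x 3) := inv_smul_helper q hq h24
  have rx31' : ∀ z : R, x 3 * (x 1 * z) = (q⁻¹) • (x 1 * (x 3 * z)) := fun z => by
    rw [← mul_assoc, rx31]; simp only [add_mul, smul_mul_assoc, mul_assoc]
  have rx32 : x 3 * x 2 = (q⁻¹) • (x 2 * x 3) := inv_smul_helper q hq h34
  have rx32' : ∀ z : R, x 3 * (x 2 * z) = (q⁻¹) • (x 2 * (x 3 * z)) := fun z => by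
    rw [← mul_assoc, rx32]; simp only [add_mul, smul_mul_assoc, mul_assoc]
  have ssc01pre : star (x 1) * star (x 0) = q • (star (x 0) * star (x 1)) := by
    have hh := congrArg star h12
    simp only [star_mul, star_smul, star_add, star_star, star_trivial] at hh
    exact hh
  have ssc01 : star (x 0) * star (x 1) = (q⁻¹) • (star (x 1) * star (x 0)) := inv_smul_helper q hq ssc01pre
  have ssc01' : ∀ z : R, star (x 0) * (star (x 1) * z) = (q⁻¹) • (star (x 1) * (star (x 0) * z)) := fun z => by
    rw [← mul_assoc, ssc01]; simp only [add_mul, smul_mul_assoc, mul_assoc]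
  have ssc02pre : star (x 2) * star (x 0) = q • (star (x 0) * star (x 2)) := by
    have hh := congrArg star h13
    simp only [star_mul, star_smul, star_add, star_star, star_trivial] at hh
    exact hh
  have ssc02 : star (x 0) * star (x 2) = (q⁻¹) • (star (x 2) * star (x 0)) := inv_smul_helper q hq ssc02pre
  have ssc02' : ∀ z : R, star (x 0) * (star (x 2) * z) = (q⁻¹) • (star (x 2) * (star (x 0) * z)) := fun z => by
    rw [← mul_assoc, ssc02]; simp only [add_mul, smul_mul_assoc, mul_assoc]
  have ssc13pre : star (x 3) * star (x 1) = q • (star (x 1) * star (x 3)) := by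
    have hh := congrArg star h24
    simp only [star_mul, star_smul, star_add, star_star, star_trivial] at hh
    exact hh
  have ssc13 : star (x 1) * star (x 3) = (q⁻¹) • (star (x 3) * star (x 1)) := inv_smul_helper q hq ssc13pre
  have ssc13' : ∀ z : R, star (x 1) * (star (x 3) * z) = (q⁻¹) • (star (x 3) * (star (x 1) * z)) := fun z => by
    rw [← mul_assoc, ssc13]; simp only [add_mul, smul_mul_assoc, mul_assoc]
  have ssc23pre : star (x 3) * star (x 2) = q • (star (x 2) * star (x 3)) := by
    have hh := congrArg star h34
    simp only [star_mul, star_smul, star_add, star_star, star_trivial] at hh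
    exact hh
  have ssc23 : star (x 2) * star (x 3) = (q⁻¹) • (star (x 3) * star (x 2)) := inv_smul_helper q hq ssc23pre
  have ssc23' : ∀ z : R, star (x 2) * (star (x 3) * z) = (q⁻¹) • (star (x 3) * (star (x 2) * z)) := fun z => by
    rw [← mul_assoc, ssc23]; simp only [add_mul, smul_mul_assoc, mul_assoc]
  have ssc03 : star (x 0) * star (x 3) = (q⁻¹ ^ 2) • (star (x 3) * star (x 0)) := by
    have hh := congrArg star h41
    simp only [star_mul, star_smul, star_add, star_star, star_trivial] at hh
    exact hh
  have ssc03' : ∀ z : R, star (x 0) * (star (x 3) * z) = (q⁻¹ ^ 2) • (star (x 3) * (star (x 0) * z)) := fun z => by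
    rw [← mul_assoc, ssc03]; simp only [add_mul, smul_mul_assoc, mul_assoc]
  have ssc12 : star (x 1) * star (x 2) = (q⁻¹ ^ 2) • (star (x 2) * star (x 1)) + (q⁻¹ ^ 2 * (q⁻¹ - q)) • (star (x 3) * star (x 0)) := by
    have hh := congrArg star h32
    simp only [star_mul, star_smul, star_add, star_star, star_trivial] at hh
    exact hh
  have ssc12' : ∀ z : R, star (x 1) * (star (x 2) * z) = (q⁻¹ ^ 2) • (star (x 2) * (star (x 1) * z)) + (q⁻¹ ^ 2 * (q⁻¹ - q)) • (star (x 3) * (star (x 0) * z)) := fun z => by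
    rw [← mul_assoc, ssc12]; simp only [add_mul, smul_mul_assoc, mul_assoc]
  have m11' : ∀ z : R, x 0 * (star (x 0) * z) = star (x 0) * (x 0 * z) := fun z => by
    rw [← mul_assoc, m11]; simp only [add_mul, smul_mul_assoc, mul_assoc]
  have m12' : ∀ z : R, x 0 * (star (x 1) * z) = (q⁻¹) • (star (x 1) * (x 0 * z)) := fun z => by
    rw [← mul_assoc, m12]; simp only [add_mul, smul_mul_assoc, mul_assoc]
  have m13' : ∀ z : R, x 0 * (star (x 2) * z) = (q⁻¹) • (star (x 2) * (x 0 * z)) := fun z => by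
    rw [← mul_assoc, m13]; simp only [add_mul, smul_mul_assoc, mul_assoc]
  have m14' : ∀ z : R, x 0 * (star (x 3) * z) = (q⁻¹ ^ 2) • (star (x 3) * (x 0 * z)) := fun z => by
    rw [← mul_assoc, m14]; simp only [add_mul, smul_mul_assoc, mul_assoc]
  have m22' : ∀ z : R, x 1 * (star (x 1) * z) = star (x 1) * (x 1 * z) + (1 - q⁻¹ ^ 2) • (star (x 0) * (x 0 * z)) := fun z => by
    rw [← mul_assoc, m22]; simp only [add_mul, smul_mul_assoc, mul_assoc]
  have m23' : ∀ z : R, x 1 * (star (x 2) * z) = (q⁻¹ ^ 2) • (star (x 2) * (x 1 * z)) := fun z => by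
    rw [← mul_assoc, m23]; simp only [add_mul, smul_mul_assoc, mul_assoc]
  have m24' : ∀ z : R, x 1 * (star (x 3) * z) = (q⁻¹) • (star (x 3) * (x 1 * z)) + (q⁻¹ * (q⁻¹ ^ 2 - 1)) • (star (x 2) * (x 0 * z)) := fun z => by
    rw [← mul_assoc, m24]; simp only [add_mul, smul_mul_assoc, mul_assoc]
  have m33f : x 2 * star (x 2) = star (x 2) * x 2 + ((1 - q⁻¹ ^ 2) • (star (x 0) * x 0) + ((1 - q⁻¹ ^ 2) * (1 + q⁻¹ ^ 2)) • (star (x 1) * x 1)) := by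
    rw [m33]; simp only [smul_add, smul_smul]
  have m33f' : ∀ z : R, x 2 * (star (x 2) * z) = star (x 2) * (x 2 * z) + ((1 - q⁻¹ ^ 2) • (star (x 0) * (x 0 * z)) + ((1 - q⁻¹ ^ 2) * (1 + q⁻¹ ^ 2)) • (star (x 1) * (x 1 * z))) := fun z => by
    rw [← mul_assoc, m33f]; simp only [add_mul, smul_mul_assoc, mul_assoc]
  have m34' : ∀ z : R, x 2 * (star (x 3) * z) = (q⁻¹) • (star (x 3) * (x 2 * z)) + ((1 - q⁻¹ ^ 2) * q⁻¹ ^ 3) • (star (x 1) * (x 0 * z)) := fun z => by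
    rw [← mul_assoc, m34]; simp only [add_mul, smul_mul_assoc, mul_assoc]
  have m44f : x 3 * star (x 3) = star (x 3) * x 3 + (((1 - q⁻¹ ^ 2) * (1 + q⁻¹ ^ 4)) • (star (x 0) * x 0) + (1 - q⁻¹ ^ 2) • (star (x 1) * x 1) + (1 - q⁻¹ ^ 2) • (star (x 2) * x 2)) := by
    rw [m44]; simp only [smul_add, smul_smul]
  have m44f' : ∀ z : R, x 3 * (star (x 3) * z) = star (x 3) * (x 3 * z) + (((1 - q⁻¹ ^ 2) * (1 + q⁻¹ ^ 4)) • (star (x 0) * (x 0 * z)) + (1 - q⁻¹ ^ 2) • (star (x 1) * (x 1 * z)) + (1 - q⁻¹ ^ 2) • (star (x 2) * (x 2 * z))) := fun z => by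
    rw [← mul_assoc, m44f]; simp only [add_mul, smul_mul_assoc, mul_assoc]
  have d10 : x 1 * star (x 0) = (q⁻¹) • (star (x 0) * x 1) := by
    have hh := congrArg star m12
    simp only [star_mul, star_smul, star_add, star_star, star_trivial] at hh
    exact hh
  have d10' : ∀ z : R, x 1 * (star (x 0) * z) = (q⁻¹) • (star (x 0) * (x 1 * z)) := fun z => by
    rw [← mul_assoc, d10]; simp only [add_mul, smul_mul_assoc, mul_assoc]
  have d20 : x 2 * star (x 0) = (q⁻¹) • (star (x 0) * x 2) := by
    have hh := congrArg star m13
    simp only [star_mul, star_smul, star_add, star_star, star_trivial] at hh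
    exact hh
  have d20' : ∀ z : R, x 2 * (star (x 0) * z) = (q⁻¹) • (star (x 0) * (x 2 * z)) := fun z => by
    rw [← mul_assoc, d20]; simp only [add_mul, smul_mul_assoc, mul_assoc]
  have d30 : x 3 * star (x 0) = (q⁻¹ ^ 2) • (star (x 0) * x 3) := by
    have hh := congrArg star m14
    simp only [star_mul, star_smul, star_add, star_star, star_trivial] at hh
    exact hh
  have d30' : ∀ z : R, x 3 * (star (x 0) * z) = (q⁻¹ ^ 2) • (star (x 0) * (x 3 * z)) := fun z => by
    rw [← mul_assoc, d30]; simp only [add_mul, smul_mul_assoc, mul_assoc]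
  have d21 : x 2 * star (x 1) = (q⁻¹ ^ 2) • (star (x 1) * x 2) := by
    have hh := congrArg star m23
    simp only [star_mul, star_smul, star_add, star_star, star_trivial] at hh
    exact hh
  have d21' : ∀ z : R, x 2 * (star (x 1) * z) = (q⁻¹ ^ 2) • (star (x 1) * (x 2 * z)) := fun z => by
    rw [← mul_assoc, d21]; simp only [add_mul, smul_mul_assoc, mul_assoc]
  have d31 : x 3 * star (x 1) = (q⁻¹) • (star (x 1) * x 3) + (q⁻¹ * (q⁻¹ ^ 2 - 1)) • (star (x 0) * x 2) := by
    have hh := congrArg star m24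
    simp only [star_mul, star_smul, star_add, star_star, star_trivial] at hh
    exact hh
  have d31' : ∀ z : R, x 3 * (star (x 1) * z) = (q⁻¹) • (star (x 1) * (x 3 * z)) + (q⁻¹ * (q⁻¹ ^ 2 - 1)) • (star (x 0) * (x 2 * z)) := fun z => by
    rw [← mul_assoc, d31]; simp only [add_mul, smul_mul_assoc, mul_assoc]
  have d32 : x 3 * star (x 2) = (q⁻¹) • (star (x 2) * x 3) + ((1 - q⁻¹ ^ 2) * q⁻¹ ^ 3) • (star (x 0) * x 1) := by
    have hh := congrArg star m34
    simp only [star_mul, star_smul, star_add, star_star, star_trivial] at hh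
    exact hh
  have d32' : ∀ z : R, x 3 * (star (x 2) * z) = (q⁻¹) • (star (x 2) * (x 3 * z)) + ((1 - q⁻¹ ^ 2) * q⁻¹ ^ 3) • (star (x 0) * (x 1 * z)) := fun z => by
    rw [← mul_assoc, d32]; simp only [add_mul, smul_mul_assoc, mul_assoc]
  have hE : star (x 0) * x 0 + star (x 1) * x 1 + star (x 2) * x 2 + star (x 3) * x 3 = 1 := by
    have := hsph
    rw [Fin.sum_univ_four] at this
    exact this
  have hsa : star a = q⁻¹ ^ 4 • (x 2 * star (x 0)) - q⁻¹ ^ 2 • (x 3 * star (x 1)) := by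
    rw [ha]; simp only [star_sub, star_smul, star_mul, star_star, star_trivial]
  have hsb : star b = -(q⁻¹ ^ 3 • (star (x 3) * star (x 0))) - q⁻¹ ^ 2 • (star (x 2) * star (x 1)) := by
    rw [hb]; simp only [star_sub, star_neg, star_smul, star_mul, star_trivial]
  refine ⟨?_, ?_, ?_, ?_, ?_, ?_, ?_⟩
  · rw [ha, hb]
    simp only [h41, h41', h32, h32', rx10, rx10', rx20, rx20', rx31, rx31', rx32, rx32', ssc01, ssc01', ssc02, ssc02', ssc13, ssc13', ssc23, ssc23', ssc03, ssc03', ssc12, ssc12', m11, m11', m12, m12', m13, m13', m14, m14', m22, m22', m23, m23', m24, m24', m33f, m33f', m34, m34', m44f, m44f', d10, d10', d20, d20', d30, d30', d21, d21', d31, d31', d32, d32', mul_add, add_mul, mul_sub, sub_mul,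
      smul_add, smul_sub, smul_smul, smul_mul_assoc, mul_smul_comm, mul_assoc,
      neg_mul, mul_neg, neg_smul, smul_neg, neg_neg, sub_eq_add_neg, neg_add]
    match_scalars <;> field_simp <;> ring
  · rw [hsa, hb]
    simp only [h41, h41', h32, h32', rx10, rx10', rx20, rx20', rx31, rx31', rx32, rx32', ssc01, ssc01', ssc02, ssc02', ssc13, ssc13', ssc23, ssc23', ssc03, ssc03', ssc12, ssc12', m11, m11', m12, m12', m13, m13', m14, m14', m22, m22', m23, m23', m24, m24', m33f, m33f', m34, m34', m44f, m44f', d10, d10', d20, d20', d30, d30', d21, d21', d31, d31', d32, d32', mul_add, add_mul, mul_sub, sub_mul,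
      smul_add, smul_sub, smul_smul, smul_mul_assoc, mul_smul_comm, mul_assoc,
      neg_mul, mul_neg, neg_smul, smul_neg, neg_neg, sub_eq_add_neg, neg_add]
    match_scalars <;> field_simp <;> ring
  · rw [ht, ha]
    simp only [h41, h41', h32, h32', rx10, rx10', rx20, rx20', rx31, rx31', rx32, rx32', ssc01, ssc01', ssc02, ssc02', ssc13, ssc13', ssc23, ssc23', ssc03, ssc03', ssc12, ssc12', m11, m11', m12, m12', m13, m13', m14, m14', m22, m22', m23, m23', m24, m24', m33f, m33f', m34, m34', m44f, m44f', d10, d10', d20, d20', d30, d30', d21, d21', d31, d31', d32, d32', mul_add, add_mul, mul_sub, sub_mul,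
      smul_add, smul_sub, smul_smul, smul_mul_assoc, mul_smul_comm, mul_assoc,
      neg_mul, mul_neg, neg_smul, smul_neg, neg_neg, sub_eq_add_neg, neg_add]
    match_scalars <;> field_simp <;> ring
  · rw [ht, hb]
    simp only [h41, h41', h32, h32', rx10, rx10', rx20, rx20', rx31, rx31', rx32, rx32', ssc01, ssc01', ssc02, ssc02', ssc13, ssc13', ssc23, ssc23', ssc03, ssc03', ssc12, ssc12', m11, m11', m12, m12', m13, m13', m14, m14', m22, m22', m23, m23', m24, m24', m33f, m33f', m34, m34', m44f, m44f', d10, d10', d20, d20', d30, d30', d21, d21', d31, d31', d32, d32', mul_add, add_mul, mul_sub, sub_mul,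
      smul_add, smul_sub, smul_smul, smul_mul_assoc, mul_smul_comm, mul_assoc,
      neg_mul, mul_neg, neg_smul, smul_neg, neg_neg, sub_eq_add_neg, neg_add]
    match_scalars <;> field_simp <;> ring
  · have key : a * star a + b * star b
        = q⁻¹ ^ 2 • (t * (star (x 0) * x 0 + star (x 1) * x 1 + star (x 2) * x 2 + star (x 3) * x 3)) - q⁻¹ ^ 4 • (t * t) := by
      rw [hsa, hsb, ha, hb, ht]
      simp only [h41, h41', h32, h32', rx10, rx10', rx20, rx20', rx31, rx31', rx32, rx32', ssc01, ssc01', ssc02, ssc02', ssc13, ssc13', ssc23, ssc23', ssc03, ssc03', ssc12, ssc12', m11, m11', m12, m12', m13, m13', m14, m14', m22, m22', m23, m23', m24, m24', m33f, m33f', m34, m34', m44f, m44f', d10, d10', d20, d20', d30, d30', d21, d21', d31, d31', d32, d32', mul_add, add_mul, mul_sub, sub_mul,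
      smul_add, smul_sub, smul_smul, smul_mul_assoc, mul_smul_comm, mul_assoc,
      neg_mul, mul_neg, neg_smul, smul_neg, neg_neg, sub_eq_add_neg, neg_add]
      match_scalars <;> field_simp <;> ring
    rw [key, hE, mul_one]
  · have key : q ^ 4 • (star a * a) + q⁻¹ ^ 4 • (star b * b)
        = t * (star (x 0) * x 0 + star (x 1) * x 1 + star (x 2) * x 2 + star (x 3) * x 3) - t * t := by
      rw [hsa, hsb, ha, hb, ht]
      simp only [h41, h41', h32, h32', rx10, rx10', rx20, rx20', rx31, rx31', rx32, rx32', ssc01, ssc01', ssc02, ssc02', ssc13, ssc13', ssc23, ssc23', ssc03, ssc03', ssc12, ssc12', m11, m11', m12, m12', m13, m13', m14, m14', m22, m22', m23, m23', m24, m24', m33f, m33f', m34, m34', m44f, m44f', d10, d10', d20, d20', d30, d30', d21, d21', d31, d31', d32, d32', mul_add, add_mul, mul_sub, sub_mul,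
      smul_add, smul_sub, smul_smul, smul_mul_assoc, mul_smul_comm, mul_assoc,
      neg_mul, mul_neg, neg_smul, smul_neg, neg_neg, sub_eq_add_neg, neg_add]
      match_scalars <;> field_simp <;> ring
    rw [key, hE, mul_one]
  · rw [hsb, hb, ht]
    simp only [h41, h41', h32, h32', rx10, rx10', rx20, rx20', rx31, rx31', rx32, rx32', ssc01, ssc01', ssc02, ssc02', ssc13, ssc13', ssc23, ssc23', ssc03, ssc03', ssc12, ssc12', m11, m11', m12, m12', m13, m13', m14, m14', m22, m22', m23, m23', m24, m24', m33f, m33f', m34, m34', m44f, m44f', d10, d10', d20, d20', d30, d30', d21, d21', d31, d31', d32, d32', mul_add, add_mul, mul_sub, sub_mul,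
      smul_add, smul_sub, smul_smul, smul_mul_assoc, mul_smul_comm, mul_assoc,
      neg_mul, mul_neg, neg_smul, smul_neg, neg_neg, sub_eq_add_neg, neg_add]
    match_scalars <;> field_simp <;> ring
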